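/- Under the conditional quantile model and IPCW assumptions, the population estimating function μ(β) = E[ Z·(N(t₀)/G(Y))·(1{Y ≥ t₀ − exp(β'Z)} − λ) ], where N(t₀) = 1{Y ≤ t₀, Δ=1}, satisfies μ(β⁰) = 0 at the true parameter β⁰. -/

import Mathlib

open MeasureTheory ProbabilityTheory
open scoped Classical ENNReal

lemma aux_setint_ind {Ω : Type*} [MeasurableSpace Ω] (μ : Measure Ω) [IsFiniteMeasure μ]
    {s : Set Ω} (t : Set Ω) (hs : MeasurableSet s) :
    ∫ ω in t, s.indicator (fun _ => (1:ℝ)) ω ∂μ = (μ (s ∩ t)).toReal := by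
  rw [integral_indicator hs, setIntegral_const, measureReal_restrict_apply hs, smul_eq_mul, mul_one, measureReal_def]

lemma aux_indep {Ω : Type*} [MeasurableSpace Ω] [StandardBorelSpace Ω]
    (μ : Measure Ω) [IsProbabilityMeasure μ] {p : ℕ}
    (T C : Ω → ℝ) (Z : Ω → Fin p → ℝ)
    (hT : Measurable T) (hC : Measurable C) (hZ : Measurable Z)
    (hCI : CondIndepFun (MeasurableSpace.comap Z inferInstance) hZ.comap_le T C μ)
    (hCZ : IndepFun C Z μ) :
    IndepFun (fun ω => (T ω, Z ω)) C μ := by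
  have hm := hZ.comap_le
  rw [indepFun_iff_measure_inter_preimage_eq_mul]
  intro s A hs hA
  revert s
  have hCA : MeasurableSet (C ⁻¹' A) := hC hA
  have hconst : (μ⟦C ⁻¹' A | MeasurableSpace.comap Z inferInstance⟧)
      =ᵐ[μ] fun _ => (μ (C ⁻¹' A)).toReal := by
    have hindp : Indep (MeasurableSpace.comap C inferInstance)
        (MeasurableSpace.comap Z inferInstance) μ := (IndepFun_iff_Indep C Z μ).mp hCZ
    have hsm : StronglyMeasurable[MeasurableSpace.comap C inferInstance]
        (Set.indicator (C ⁻¹' A) fun _ => (1 : ℝ)) :=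
      stronglyMeasurable_const.indicator ⟨A, hA, rfl⟩
    refine (condExp_indep_eq hC.comap_le hm hsm hindp).trans ?_
    refine Filter.Eventually.of_forall fun _ => ?_
    exact integral_indicator_one hCA
  have hprod := (condIndepFun_iff_condExp_inter_preimage_eq_mul hT hC).mp hCI
  refine MeasurableSpace.induction_on_inter
    (C := fun s _ => μ ((fun ω => (T ω, Z ω)) ⁻¹' s ∩ C ⁻¹' A)
        = μ ((fun ω => (T ω, Z ω)) ⁻¹' s) * μ (C ⁻¹' A))
    generateFrom_prod.symm isPiSystem_prod ?_ ?_ ?_ ?_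
  · simp
  · rintro t ⟨u, hu, v, hv, rfl⟩
    have hu' : MeasurableSet u := hu
    have hv' : MeasurableSet v := hv
    have hpre : (fun ω => (T ω, Z ω)) ⁻¹' (u ×ˢ v) = T ⁻¹' u ∩ Z ⁻¹' v :=
      Set.mk_preimage_prod T Z
    rw [hpre]
    have hZv : MeasurableSet[MeasurableSpace.comap Z inferInstance] (Z ⁻¹' v) := ⟨v, hv', rfl⟩
    have hTu : MeasurableSet (T ⁻¹' u) := hT hu'
    have key : (μ (T ⁻¹' u ∩ Z ⁻¹' v ∩ C ⁻¹' A)).toReal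
        = (μ (T ⁻¹' u ∩ Z ⁻¹' v)).toReal * (μ (C ⁻¹' A)).toReal := by
      have e1 : (μ (T ⁻¹' u ∩ Z ⁻¹' v ∩ C ⁻¹' A)).toReal
          = ∫ ω in Z ⁻¹' v, (μ⟦T ⁻¹' u ∩ C ⁻¹' A | MeasurableSpace.comap Z inferInstance⟧) ω ∂μ := by
        rw [setIntegral_condExp hm ((integrable_const (1:ℝ)).indicator (hTu.inter hCA)) hZv,
          aux_setint_ind μ _ (hTu.inter hCA)]
        congr 2
        ext ω
        simp only [Set.mem_inter_iff]
        tauto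
      have e2 : ∫ ω in Z ⁻¹' v, (μ⟦T ⁻¹' u ∩ C ⁻¹' A | MeasurableSpace.comap Z inferInstance⟧) ω ∂μ
          = ∫ ω in Z ⁻¹' v,
            (μ⟦T ⁻¹' u | MeasurableSpace.comap Z inferInstance⟧) ω * (μ (C ⁻¹' A)).toReal ∂μ := by
        refine setIntegral_congr_ae (hm _ hZv) ?_
        filter_upwards [hprod u A hu' hA, hconst] with ω h1 h2
        intro _
        rw [h1, h2]
      have e3 : ∫ ω in Z ⁻¹' v,
            (μ⟦T ⁻¹' u | MeasurableSpace.comap Z inferInstance⟧) ω * (μ (C ⁻¹' A)).toReal ∂μ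
          = (μ (T ⁻¹' u ∩ Z ⁻¹' v)).toReal * (μ (C ⁻¹' A)).toReal := by
        rw [integral_mul_const]
        congr 1
        rw [setIntegral_condExp hm ((integrable_const (1:ℝ)).indicator hTu) hZv,
          aux_setint_ind μ _ hTu]
      rw [e1, e2, e3]
    rw [← ENNReal.toReal_mul] at key
    exact (ENNReal.toReal_eq_toReal_iff' (measure_ne_top _ _)
      (ENNReal.mul_ne_top (measure_ne_top _ _) (measure_ne_top _ _))).mp key
  · intro t ht hPt
    have hWt : MeasurableSet ((fun ω => (T ω, Z ω)) ⁻¹' t) := (hT.prodMk hZ) ht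
    rw [Set.preimage_compl]
    have h1 : ((fun ω => (T ω, Z ω)) ⁻¹' t)ᶜ ∩ C ⁻¹' A
        = C ⁻¹' A \ ((fun ω => (T ω, Z ω)) ⁻¹' t ∩ C ⁻¹' A) := by
      ext ω; simp only [Set.mem_inter_iff, Set.mem_compl_iff, Set.mem_diff]; tauto
    rw [h1, measure_diff Set.inter_subset_right (hWt.inter hCA).nullMeasurableSet
        (measure_ne_top _ _), hPt,
      measure_compl hWt (measure_ne_top _ _), measure_univ,
      ENNReal.sub_mul (fun _ _ => measure_ne_top _ _), one_mul]
  · intro f hdisj hmeas hP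
    rw [Set.preimage_iUnion, Set.iUnion_inter, measure_iUnion, measure_iUnion]
    · simp_rw [hP]
      rw [ENNReal.tsum_mul_right]
    · exact fun i j hij => (hdisj hij).preimage _
    · exact fun i => (hT.prodMk hZ) (hmeas i)
    · exact fun i j hij => Disjoint.mono Set.inter_subset_left Set.inter_subset_left
        ((hdisj hij).preimage _)
    · exact fun i => ((hT.prodMk hZ) (hmeas i)).inter hCA

lemma aux_G_meas {Ω : Type*} [MeasurableSpace Ω] (μ : Measure Ω) [IsProbabilityMeasure μ]
    (C : Ω → ℝ) (G : ℝ → ℝ) (hG : ∀ t, G t = (μ {ω | t ≤ C ω}).toReal) :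
    Measurable G := by
  have : Antitone G := by
    intro a b hab
    rw [hG a, hG b]
    refine ENNReal.toReal_le_toReal (measure_ne_top _ _) (measure_ne_top _ _) |>.mpr ?_
    exact measure_mono fun ω (h : b ≤ C ω) => le_trans hab h
  exact this.measurable

lemma aux_ipcw {Ω : Type*} [MeasurableSpace Ω] (μ : Measure Ω) [IsProbabilityMeasure μ]
    {p : ℕ} (T C : Ω → ℝ) (Z : Ω → Fin p → ℝ)
    (hT : Measurable T) (hC : Measurable C) (hZ : Measurable Z)
    (hInd : IndepFun (fun ω => (T ω, Z ω)) C μ)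
    (G : ℝ → ℝ) (hG : ∀ t, G t = (μ {ω | t ≤ C ω}).toReal)
    (g : ℝ × (Fin p → ℝ) → ℝ) (hg : Measurable g)
    (hgi : Integrable (fun ω => G (T ω) * g (T ω, Z ω)) μ) :
    ∫ ω, (if T ω ≤ C ω then (1:ℝ) else 0) * g (T ω, Z ω) ∂μ
      = ∫ ω, G (T ω) * g (T ω, Z ω) ∂μ := by
  have hGm : Measurable G := aux_G_meas μ C G hG
  have hGnn : ∀ t, 0 ≤ G t := fun t => by rw [hG]; exact ENNReal.toReal_nonneg
  haveI : IsProbabilityMeasure (μ.map C) := Measure.isProbabilityMeasure_map hC.aemeasurable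
  set W : Ω → ℝ × (Fin p → ℝ) := fun ω => (T ω, Z ω) with hW_def
  have hW : Measurable W := hT.prodMk hZ
  have hmap : μ.map (fun ω => (W ω, C ω)) = (μ.map W).prod (μ.map C) :=
    (indepFun_iff_map_prod_eq_prod_map_map hW.aemeasurable hC.aemeasurable).mp hInd
  set F : (ℝ × (Fin p → ℝ)) × ℝ → ℝ :=
    fun x => (if x.1.1 ≤ x.2 then (1:ℝ) else 0) * g x.1 with hF_def
  have hFm : Measurable F := by
    apply Measurable.mul
    · exact Measurable.ite (measurableSet_le (measurable_fst.fst) measurable_snd)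
        measurable_const measurable_const
    · exact hg.comp measurable_fst
  have hmgG : Measurable fun x : ℝ × (Fin p → ℝ) => G x.1 * g x :=
    (hGm.comp measurable_fst).mul hg
  have hgW : Integrable (fun x : ℝ × (Fin p → ℝ) => G x.1 * g x) (μ.map W) :=
    (integrable_map_measure hmgG.aestronglyMeasurable hW.aemeasurable).mpr hgi
  -- inner integral computations
  have hslice : ∀ w : ℝ × (Fin p → ℝ),
      (fun c => F (w, c)) = fun c => (Set.Ici w.1).indicator (fun _ => (1:ℝ)) c * g w := by
    intro w
    funext c
    simp [hF_def, Set.indicator_apply, Set.mem_Ici]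
  have hG_Ici : ∀ t : ℝ, ((μ.map C) (Set.Ici t)).toReal = G t := by
    intro t
    rw [Measure.map_apply hC measurableSet_Ici, hG]
    rfl
  have hinner : ∀ w : ℝ × (Fin p → ℝ), ∫ c, F (w, c) ∂(μ.map C) = G w.1 * g w := by
    intro w
    have hii : ∫ a, (Set.Ici w.1).indicator (fun _ => (1:ℝ)) a ∂(μ.map C)
        = ((μ.map C) (Set.Ici w.1)).toReal := integral_indicator_one measurableSet_Ici
    rw [hslice w, integral_mul_const, hii, hG_Ici]
  have hinner_norm : ∀ w : ℝ × (Fin p → ℝ),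
      ∫ c, ‖F (w, c)‖ ∂(μ.map C) = G w.1 * ‖g w‖ := by
    intro w
    have : (fun c => ‖F (w, c)‖)
        = fun c => (Set.Ici w.1).indicator (fun _ => (1:ℝ)) c * ‖g w‖ := by
      funext c
      simp only [hF_def, norm_mul]
      by_cases h : w.1 ≤ c <;> simp [h, Set.indicator_apply, Set.mem_Ici]
    have hii : ∫ a, (Set.Ici w.1).indicator (fun _ => (1:ℝ)) a ∂(μ.map C)
        = ((μ.map C) (Set.Ici w.1)).toReal := integral_indicator_one measurableSet_Ici
    rw [this, integral_mul_const, hii, hG_Ici]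
  have hFint : Integrable F ((μ.map W).prod (μ.map C)) := by
    refine (integrable_prod_iff hFm.aestronglyMeasurable).mpr ⟨?_, ?_⟩
    · refine Filter.Eventually.of_forall fun w => ?_
      rw [hslice w]
      exact (((integrable_const (1:ℝ)).indicator measurableSet_Ici).mul_const _)
    · have : (fun w : ℝ × (Fin p → ℝ) => ∫ c, ‖F (w, c)‖ ∂(μ.map C))
          = fun w => G w.1 * ‖g w‖ := funext hinner_norm
      rw [this]
      refine hgW.norm.congr (Filter.Eventually.of_forall fun w => ?_)
      show ‖G w.1 * g w‖ = G w.1 * ‖g w‖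
      rw [norm_mul, Real.norm_of_nonneg (hGnn _)]
  have hL : ∫ ω, (if T ω ≤ C ω then (1:ℝ) else 0) * g (T ω, Z ω) ∂μ
      = ∫ x, F x ∂((μ.map W).prod (μ.map C)) := by
    rw [← hmap, integral_map (hW.prodMk hC).aemeasurable hFm.aestronglyMeasurable]
  rw [hL, integral_prod _ hFint]
  simp_rw [hinner]
  rw [integral_map hW.aemeasurable hmgG.aestronglyMeasurable]

lemma aux_pull {Ω : Type*} {m m0 : MeasurableSpace Ω} (μ : @Measure Ω m0)
    [IsProbabilityMeasure μ] (hm : m ≤ m0) (h f : Ω → ℝ)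
    (hh : StronglyMeasurable[m] h) (hf : Integrable f μ)
    (hhf : Integrable (fun ω => h ω * f ω) μ) :
    ∫ ω, h ω * f ω ∂μ = ∫ ω, h ω * (μ[f|m]) ω ∂μ := by
  have h1 : μ[fun ω => h ω * f ω|m] =ᵐ[μ] fun ω => h ω * (μ[f|m]) ω :=
    condExp_mul_of_stronglyMeasurable_left hh hhf hf
  rw [← integral_condExp hm (f := fun ω => h ω * f ω)]
  exact integral_congr_ae h1

/-- Under the conditional quantile model and IPCW assumptions, the
population estimating function
`μ(β) = E[ Z·(N(t₀)/G(Y))·(1{Y ≥ t₀ − exp(β'Z)} − λ) ]`, with `N(t₀) = 1{Y ≤ t₀, Δ=1}`,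
satisfies `μ(β⁰) = 0` at the true parameter `β⁰`. -/
theorem stmt15 {Ω : Type*} [MeasurableSpace Ω] [StandardBorelSpace Ω] [Nonempty Ω]
    (μ : Measure Ω) [IsProbabilityMeasure μ] {p : ℕ}
    (T C : Ω → ℝ) (Z : Ω → Fin p → ℝ)
    (hT : Measurable T) (hC : Measurable C) (hZ : Measurable Z)
    (Y : Ω → ℝ) (hY : ∀ ω, Y ω = min (T ω) (C ω))
    (Δ : Ω → Prop) (hΔ : ∀ ω, Δ ω ↔ T ω ≤ C ω)
    (N : Ω → ℝ → ℝ) (hN : ∀ ω t, N ω t = if Y ω ≤ t ∧ Δ ω then 1 else 0)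
    (G : ℝ → ℝ) (hG : ∀ t, G t = (μ {ω | t ≤ C ω}).toReal)
    (t₀ : ℝ) (l : ℝ) (hl : l ∈ Set.Ioo (0 : ℝ) 1) (β₀ : Fin p → ℝ)
    (hCI : CondIndepFun (MeasurableSpace.comap Z inferInstance) hZ.comap_le T C μ)
    (hCZ : IndepFun C Z μ)
    (hpos : ∀ t ≤ t₀, 0 < G t)
    (hint : Integrable (fun ω => ‖Z ω‖ / G (Y ω)) μ)
    (hmodel : (μ[Set.indicator {ω' | t₀ - T ω' ≤ Real.exp (∑ i, β₀ i * Z ω' i) ∧ T ω' ≤ t₀}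
          (fun _ => (1 : ℝ)) | MeasurableSpace.comap Z inferInstance])
        =ᵐ[μ] fun ω => l * (μ[Set.indicator {ω' | T ω' ≤ t₀} (fun _ => (1 : ℝ)) |
          MeasurableSpace.comap Z inferInstance]) ω) :
    ∫ ω, ((N ω t₀ / G (Y ω))
          * ((if t₀ - Real.exp (∑ i, β₀ i * Z ω i) ≤ Y ω then 1 else 0) - l)) • Z ω ∂μ
      = 0 := by
  obtain ⟨hl0, hl1⟩ := hl
  have hm := hZ.comap_le
  have hGm : Measurable G := aux_G_meas μ C G hG
  have hGnn : ∀ t, 0 ≤ G t := fun t => by rw [hG]; exact ENNReal.toReal_nonneg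
  have hG1 : ∀ t, G t ≤ 1 := by
    intro t
    rw [hG]
    calc (μ {ω | t ≤ C ω}).toReal ≤ (1 : ℝ≥0∞).toReal :=
          ENNReal.toReal_mono ENNReal.one_ne_top prob_le_one
      _ = 1 := by simp
  have hInd : IndepFun (fun ω => (T ω, Z ω)) C μ := aux_indep μ T C Z hT hC hZ hCI hCZ
  -- the sets of the model hypothesis
  set A : Set Ω := {ω' | t₀ - T ω' ≤ Real.exp (∑ i, β₀ i * Z ω' i) ∧ T ω' ≤ t₀} with hA_def
  set B : Set Ω := {ω' | T ω' ≤ t₀} with hB_def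
  have hsumΩ : Measurable fun ω => ∑ i, β₀ i * Z ω i :=
    Finset.measurable_sum _ fun i _ => ((measurable_pi_apply i).comp hZ).const_mul _
  have hAm : MeasurableSet A :=
    MeasurableSet.inter
      (measurableSet_le (measurable_const.sub hT) (Real.measurable_exp.comp hsumΩ))
      (measurableSet_le hT measurable_const)
  have hBm : MeasurableSet B := measurableSet_le hT measurable_const
  -- the deterministic weight function
  set q : ℝ × (Fin p → ℝ) → ℝ := fun x =>
    (if x.1 ≤ t₀ then (1:ℝ) else 0) / G x.1 *
      ((if t₀ - Real.exp (∑ i, β₀ i * x.2 i) ≤ x.1 then (1:ℝ) else 0) - l) with hq_def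
  have hsum : Measurable fun x : ℝ × (Fin p → ℝ) => ∑ i, β₀ i * x.2 i :=
    Finset.measurable_sum _ fun i _ => ((measurable_pi_apply i).comp measurable_snd).const_mul _
  have hq_m : Measurable q := by
    apply Measurable.mul
    · exact (Measurable.ite (measurableSet_le measurable_fst measurable_const)
        measurable_const measurable_const).div (hGm.comp measurable_fst)
    · exact (Measurable.ite
        (measurableSet_le (measurable_const.sub (Real.measurable_exp.comp hsum)) measurable_fst)
        measurable_const measurable_const).sub measurable_const
  set c : Ω → ℝ := fun ω => (if T ω ≤ C ω then (1:ℝ) else 0) * q (T ω, Z ω) with hc_def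
  have hc_m : Measurable c :=
    (Measurable.ite (measurableSet_le hT hC) measurable_const measurable_const).mul
      (hq_m.comp (hT.prodMk hZ))
  -- pointwise rewriting of the integrand
  have hrew : ∀ ω, ((N ω t₀ / G (Y ω))
      * ((if t₀ - Real.exp (∑ i, β₀ i * Z ω i) ≤ Y ω then (1:ℝ) else 0) - l)) • Z ω
      = c ω • Z ω := by
    intro ω
    simp only [hc_def]
    by_cases hTC : T ω ≤ C ω
    · have hYT : Y ω = T ω := by rw [hY ω]; exact min_eq_left hTC
      have hand : (Y ω ≤ t₀ ∧ Δ ω) ↔ T ω ≤ t₀ := by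
        rw [hYT]; exact and_iff_left ((hΔ ω).mpr hTC)
      rw [hN, if_congr hand rfl rfl, hYT, if_pos hTC, one_mul]
    · have hΔ' : ¬ Δ ω := fun h => hTC ((hΔ ω).mp h)
      rw [hN, if_neg (fun h => hΔ' h.2), if_neg hTC]
      simp
  have hgoal : ∫ ω, ((N ω t₀ / G (Y ω))
      * ((if t₀ - Real.exp (∑ i, β₀ i * Z ω i) ≤ Y ω then (1:ℝ) else 0) - l)) • Z ω ∂μ
      = ∫ ω, c ω • Z ω ∂μ := integral_congr_ae (Filter.Eventually.of_forall hrew)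
  rw [hgoal]
  -- bounds
  have hd_abs : ∀ (e : ℝ), e = 0 ∨ e = 1 → |e - l| ≤ 1 := by
    rintro e (rfl | rfl) <;> · rw [abs_le]; constructor <;> linarith
  have hYleB : ∀ ω, T ω ≤ t₀ → Y ω ≤ t₀ := fun ω h => by
    rw [hY]; exact le_trans (min_le_left _ _) h
  have hZle : ∀ ω, T ω ≤ t₀ → ‖Z ω‖ ≤ ‖Z ω‖ / G (Y ω) := by
    intro ω h
    have h1 : 0 < G (Y ω) := hpos _ (hYleB ω h)
    rw [le_div_iff₀ h1]
    exact mul_le_of_le_one_right (norm_nonneg _) (hG1 _)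
  have hRHSnn : ∀ ω, (0:ℝ) ≤ ‖Z ω‖ / G (Y ω) := fun ω =>
    div_nonneg (norm_nonneg _) (hGnn _)
  -- integrability of the vector integrand
  have hcZ_m : Measurable fun ω => c ω • Z ω := by
    apply measurable_pi_lambda
    intro i
    exact hc_m.mul ((measurable_pi_apply i).comp hZ)
  have hq_abs : ∀ ω, |q (T ω, Z ω)| ≤ (if T ω ≤ t₀ then (1:ℝ) else 0) / G (T ω) := by
    intro ω
    simp only [hq_def]
    rw [abs_mul]
    by_cases hb : T ω ≤ t₀
    · rw [if_pos hb]
      have h1 : 0 < G (T ω) := hpos _ hb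
      have h2 : |(1:ℝ) / G (T ω)| = 1 / G (T ω) := abs_of_pos (by positivity)
      calc |(1:ℝ) / G (T ω)| * |(if t₀ - Real.exp (∑ i, β₀ i * Z ω i) ≤ T ω then (1:ℝ) else 0) - l|
          ≤ (1 / G (T ω)) * 1 := by
            rw [h2]
            refine mul_le_mul_of_nonneg_left ?_ (by positivity)
            refine hd_abs _ ?_
            split_ifs <;> simp
        _ = 1 / G (T ω) := mul_one _
    · rw [if_neg hb]
      simp
  have hbound : ∀ ω, ‖c ω • Z ω‖ ≤ ‖Z ω‖ / G (Y ω) := by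
    intro ω
    rw [norm_smul, Real.norm_eq_abs]
    by_cases hTC : T ω ≤ C ω
    · have hYT : Y ω = T ω := by rw [hY ω]; exact min_eq_left hTC
      simp only [hc_def, if_pos hTC, one_mul]
      by_cases hb : T ω ≤ t₀
      · have h1 : 0 < G (T ω) := hpos _ hb
        have h3 := hq_abs ω
        rw [if_pos hb] at h3
        calc |q (T ω, Z ω)| * ‖Z ω‖ ≤ (1 / G (T ω)) * ‖Z ω‖ :=
              mul_le_mul_of_nonneg_right h3 (norm_nonneg _)
          _ = ‖Z ω‖ / G (T ω) := by ring
          _ = ‖Z ω‖ / G (Y ω) := by rw [hYT]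
      · have h3 := hq_abs ω
        rw [if_neg hb] at h3
        have h4 : |q (T ω, Z ω)| ≤ 0 := le_trans h3 (by simp)
        have h5 : q (T ω, Z ω) = 0 := abs_eq_zero.mp (le_antisymm h4 (abs_nonneg _))
        rw [h5, abs_zero, zero_mul]
        exact hRHSnn ω
    · simp only [hc_def, if_neg hTC, zero_mul, abs_zero]
      exact hRHSnn ω
  have hci : Integrable (fun ω => c ω • Z ω) μ :=
    hint.mono' hcZ_m.aestronglyMeasurable (Filter.Eventually.of_forall hbound)
  -- reduce to coordinates
  funext i
  show (∫ ω, c ω • Z ω ∂μ) i = 0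
  have hproj := ContinuousLinearMap.integral_comp_comm
    (ContinuousLinearMap.proj (R := ℝ) (φ := fun _ : Fin p => ℝ) i) hci
  simp only [ContinuousLinearMap.proj_apply, Pi.smul_apply, smul_eq_mul] at hproj
  rw [← hproj]
  -- coordinate-level facts
  have hZi_abs : ∀ ω, |Z ω i| ≤ ‖Z ω‖ := fun ω => by
    simpa [Real.norm_eq_abs] using norm_le_pi_norm (Z ω) i
  have intA : Integrable (fun ω => A.indicator (fun _ => (1:ℝ)) ω * Z ω i) μ := by
    refine hint.mono' ?_ (Filter.Eventually.of_forall fun ω => ?_)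
    · exact ((measurable_one.indicator hAm).mul ((measurable_pi_apply i).comp hZ)).aestronglyMeasurable
    · by_cases hω : ω ∈ A
      · rw [Set.indicator_of_mem hω, one_mul, Real.norm_eq_abs]
        exact le_trans (le_trans (hZi_abs ω) (le_refl _)) (hZle ω hω.2)
      · rw [Set.indicator_of_notMem hω, zero_mul, norm_zero]
        exact hRHSnn ω
  have intB : Integrable (fun ω => B.indicator (fun _ => (1:ℝ)) ω * Z ω i) μ := by
    refine hint.mono' ?_ (Filter.Eventually.of_forall fun ω => ?_)
    · exact ((measurable_one.indicator hBm).mul ((measurable_pi_apply i).comp hZ)).aestronglyMeasurable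
    · by_cases hω : ω ∈ B
      · rw [Set.indicator_of_mem hω, one_mul, Real.norm_eq_abs]
        exact le_trans (hZi_abs ω) (hZle ω hω)
      · rw [Set.indicator_of_notMem hω, zero_mul, norm_zero]
        exact hRHSnn ω
  -- pointwise identity after removing the censoring weight
  have hpt : ∀ ω, G (T ω) * (q (T ω, Z ω) * Z ω i)
      = (A.indicator (fun _ => (1:ℝ)) ω - l * B.indicator (fun _ => (1:ℝ)) ω) * Z ω i := by
    intro ω
    by_cases hb : T ω ≤ t₀
    · have hg0 : G (T ω) ≠ 0 := (hpos _ hb).ne'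
      have hBmem : ω ∈ B := hb
      rw [Set.indicator_of_mem hBmem]
      by_cases he : t₀ - Real.exp (∑ j, β₀ j * Z ω j) ≤ T ω
      · have hAmem : ω ∈ A := ⟨sub_le_comm.mp he, hb⟩
        rw [Set.indicator_of_mem hAmem]
        simp only [hq_def, if_pos hb, if_pos he]
        field_simp
      · have hAnot : ω ∉ A := fun h => he (sub_le_comm.mp h.1)
        rw [Set.indicator_of_notMem hAnot]
        simp only [hq_def, if_pos hb, if_neg he]
        field_simp
    · have hBnot : ω ∉ B := hb
      have hAnot : ω ∉ A := fun h => hb h.2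
      rw [Set.indicator_of_notMem hAnot, Set.indicator_of_notMem hBnot]
      simp [hq_def, if_neg hb]
  have intRHS : Integrable (fun ω =>
      (A.indicator (fun _ => (1:ℝ)) ω - l * B.indicator (fun _ => (1:ℝ)) ω) * Z ω i) μ := by
    refine (intA.sub (intB.const_mul l)).congr (Filter.Eventually.of_forall fun ω => ?_)
    simp only [Pi.sub_apply]
    ring
  have hGq_int : Integrable (fun ω => G (T ω) * (q (T ω, Z ω) * Z ω i)) μ :=
    intRHS.congr (Filter.Eventually.of_forall fun ω => (hpt ω).symm)
  -- apply IPCW identity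
  have hgim : Measurable fun x : ℝ × (Fin p → ℝ) => q x * x.2 i :=
    hq_m.mul ((measurable_pi_apply i).comp measurable_snd)
  have step2 := aux_ipcw μ T C Z hT hC hZ hInd G hG (fun x => q x * x.2 i) hgim hGq_int
  have step1 : ∫ ω, c ω * Z ω i ∂μ
      = ∫ ω, (if T ω ≤ C ω then (1:ℝ) else 0) * (q (T ω, Z ω) * Z ω i) ∂μ := by
    refine integral_congr_ae (Filter.Eventually.of_forall fun ω => ?_)
    simp only [hc_def]
    ring
  have step3 : ∫ ω, G (T ω) * (q (T ω, Z ω) * Z ω i) ∂μ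
      = ∫ ω, (A.indicator (fun _ => (1:ℝ)) ω - l * B.indicator (fun _ => (1:ℝ)) ω) * Z ω i ∂μ :=
    integral_congr_ae (Filter.Eventually.of_forall hpt)
  -- the conditional-model step
  have hZi_sm : StronglyMeasurable[MeasurableSpace.comap Z inferInstance] (fun ω => Z ω i) := by
    have hZm : @Measurable Ω (Fin p → ℝ) (MeasurableSpace.comap Z inferInstance) _ Z :=
      fun s hs => ⟨s, hs, rfl⟩
    exact ((measurable_pi_apply i).comp hZm).stronglyMeasurable
  have indAint : Integrable (A.indicator fun _ => (1:ℝ)) μ := (integrable_const 1).indicator hAm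
  have indBint : Integrable (B.indicator fun _ => (1:ℝ)) μ := (integrable_const 1).indicator hBm
  have intA' : Integrable (fun ω => Z ω i * A.indicator (fun _ => (1:ℝ)) ω) μ :=
    intA.congr (Filter.Eventually.of_forall fun ω => mul_comm _ _)
  have intB' : Integrable (fun ω => Z ω i * B.indicator (fun _ => (1:ℝ)) ω) μ :=
    intB.congr (Filter.Eventually.of_forall fun ω => mul_comm _ _)
  have pA := aux_pull μ hm (fun ω => Z ω i) (A.indicator fun _ => (1:ℝ)) hZi_sm indAint intA'
  have pB := aux_pull μ hm (fun ω => Z ω i) (B.indicator fun _ => (1:ℝ)) hZi_sm indBint intB'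
  have stepD : ∫ ω, A.indicator (fun _ => (1:ℝ)) ω * Z ω i ∂μ
      = l * ∫ ω, B.indicator (fun _ => (1:ℝ)) ω * Z ω i ∂μ := by
    calc ∫ ω, A.indicator (fun _ => (1:ℝ)) ω * Z ω i ∂μ
        = ∫ ω, Z ω i * A.indicator (fun _ => (1:ℝ)) ω ∂μ :=
          integral_congr_ae (Filter.Eventually.of_forall fun ω => mul_comm _ _)
      _ = ∫ ω, Z ω i * (μ[A.indicator fun _ => (1:ℝ)|MeasurableSpace.comap Z inferInstance]) ω ∂μ := pA
      _ = ∫ ω, Z ω i * (l * (μ[B.indicator fun _ => (1:ℝ)|MeasurableSpace.comap Z inferInstance]) ω) ∂μ := by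
          refine integral_congr_ae ?_
          filter_upwards [hmodel] with ω hω
          rw [hω]
      _ = ∫ ω, l * (Z ω i * (μ[B.indicator fun _ => (1:ℝ)|MeasurableSpace.comap Z inferInstance]) ω) ∂μ :=
          integral_congr_ae (Filter.Eventually.of_forall fun ω => by ring)
      _ = l * ∫ ω, Z ω i * (μ[B.indicator fun _ => (1:ℝ)|MeasurableSpace.comap Z inferInstance]) ω ∂μ :=
          integral_const_mul l _
      _ = l * ∫ ω, Z ω i * B.indicator (fun _ => (1:ℝ)) ω ∂μ := by rw [← pB]
      _ = l * ∫ ω, B.indicator (fun _ => (1:ℝ)) ω * Z ω i ∂μ := by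
          congr 1
          exact integral_congr_ae (Filter.Eventually.of_forall fun ω => mul_comm _ _)
  rw [step1, step2, step3]
  have split : ∫ ω, (A.indicator (fun _ => (1:ℝ)) ω - l * B.indicator (fun _ => (1:ℝ)) ω) * Z ω i ∂μ
      = (∫ ω, A.indicator (fun _ => (1:ℝ)) ω * Z ω i ∂μ)
        - l * ∫ ω, B.indicator (fun _ => (1:ℝ)) ω * Z ω i ∂μ := by
    have h1 : ∀ ω, (A.indicator (fun _ => (1:ℝ)) ω - l * B.indicator (fun _ => (1:ℝ)) ω) * Z ω i
        = A.indicator (fun _ => (1:ℝ)) ω * Z ω i - l * (B.indicator (fun _ => (1:ℝ)) ω * Z ω i) :=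
      fun ω => by ring
    rw [integral_congr_ae (Filter.Eventually.of_forall h1),
      integral_sub intA (intB.const_mul l), integral_const_mul]
  rw [split, stepD, sub_self]
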